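/- Let P be a polynomial over ℚ of degree k ≥ 1 with leading coefficient n/k! for a positive integer n (so P(T) = (n/k!)·T^k + lower-degree terms), written as the unique Macaulay sum P(T) = Σ_{i=1}^N binom(T + a_i − (i−1), a_i) with a_1 ≥ a_2 ≥ ⋯ ≥ a_N ≥ 0. Then exactly n of the a_i equal k, all a_i ≤ k, and consequently ω^k · n ≤ Σ_i ω^(a_i) < ω^k · (n+1) in ordinal arithmetic. -/

import Mathlib

open Polynomial Ordinal

noncomputable def binomPoly (a : ℕ) (c : ℤ) : Polynomial ℚ :=
  C (1 / (a.factorial : ℚ)) * ∏ j ∈ Finset.range a, (X + C ((c : ℚ) - (j : ℚ)))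

lemma binomPoly_degree (a : ℕ) (c : ℤ) : (binomPoly a c).degree = a := by
  unfold binomPoly
  have hu : (1 / (a.factorial : ℚ)) ≠ 0 := by
    simp [Nat.factorial_ne_zero]
  rw [degree_C_mul hu, degree_prod]
  simp only [degree_X_add_C, Finset.sum_const, Finset.card_range, nsmul_eq_mul, mul_one, nsmul_one]

lemma binomPoly_natDegree (a : ℕ) (c : ℤ) : (binomPoly a c).natDegree = a :=
  natDegree_eq_of_degree_eq_some (binomPoly_degree a c)

lemma binomPoly_leadingCoeff (a : ℕ) (c : ℤ) :
    (binomPoly a c).leadingCoeff = 1 / (a.factorial : ℚ) := by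
  unfold binomPoly
  have hm : (∏ j ∈ Finset.range a, (X + C ((c : ℚ) - (j : ℚ)))).Monic :=
    monic_prod_of_monic _ _ fun j _ => monic_X_add_C _
  rw [leadingCoeff_mul, hm.leadingCoeff, leadingCoeff_C, mul_one]

lemma binomPoly_coeff_self (a : ℕ) (c : ℤ) :
    (binomPoly a c).coeff a = 1 / (a.factorial : ℚ) := by
  have := binomPoly_leadingCoeff a c
  rwa [leadingCoeff, binomPoly_natDegree] at this

lemma binomPoly_coeff_eq_zero (a : ℕ) (c : ℤ) {m : ℕ} (h : a < m) :
    (binomPoly a c).coeff m = 0 := by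
  apply coeff_eq_zero_of_degree_lt
  rw [binomPoly_degree]
  exact_mod_cast Nat.cast_lt.mpr h

lemma ord_list_sum_lt {c : Ordinal} (hc : 0 < c) (hp : Ordinal.Principal (· + ·) c)
    (l : List Ordinal) (h : ∀ x ∈ l, x < c) : l.sum < c := by
  induction l with
  | nil => simpa using hc
  | cons x xs ih =>
      rw [List.sum_cons]
      exact hp (h x (by simp)) (ih fun y hy => h y (by simp [hy]))

lemma ord_sum_replicate (x : Ordinal) (n : ℕ) :
    (List.replicate n x).sum = x * n := by
  induction n with
  | zero => simp
  | succ m ih =>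
      rw [List.replicate_succ', List.sum_append, ih, List.sum_cons, List.sum_nil,
        add_zero, Nat.cast_succ, mul_add, mul_one]

universe u

lemma ord_bounds {k n N : ℕ} (a : Fin N → ℕ) (hnN : n ≤ N)
    (hiff : ∀ i : Fin N, a i = k ↔ (i : ℕ) < n) (hle : ∀ i : Fin N, a i ≤ k) :
    (ω : Ordinal.{u}) ^ k * n ≤ ((List.finRange N).map (fun i => (ω : Ordinal.{u}) ^ (a i))).sum ∧
    ((List.finRange N).map (fun i => (ω : Ordinal.{u}) ^ (a i))).sum < (ω : Ordinal.{u}) ^ k * (n + 1) := by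
  set L := (List.finRange N).map (fun i => (ω : Ordinal.{u}) ^ (a i)) with hLdef
  have hLlen : L.length = N := by simp [hLdef]
  have hLget : ∀ (m : ℕ) (hm : m < N), L[m]'(by omega) = (ω : Ordinal.{u}) ^ (a ⟨m, hm⟩) := by
    intro m hm
    simp [hLdef]
  have htake : L.take n = List.replicate n ((ω : Ordinal.{u}) ^ k) := by
    apply List.ext_getElem
    · simp [hLlen, Nat.min_eq_left hnN]
    · intro m h1 h2
      have hmn : m < n := by simpa [hLlen, Nat.min_eq_left hnN] using h1
      have hmN : m < N := lt_of_lt_of_le hmn hnN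
      rw [List.getElem_take, List.getElem_replicate, hLget m hmN,
        (hiff ⟨m, hmN⟩).mpr hmn]
  have hdrop : ∀ x ∈ L.drop n, x < (ω : Ordinal.{u}) ^ k := by
    intro x hx
    rw [List.mem_iff_getElem] at hx
    obtain ⟨m, hm, rfl⟩ := hx
    have hmN : n + m < N := by simp [hLlen] at hm; omega
    rw [List.getElem_drop, hLget (n + m) hmN]
    have hak : a ⟨n + m, hmN⟩ < k := by
      have h1 := hle ⟨n + m, hmN⟩
      have h2 := (hiff ⟨n + m, hmN⟩)
      simp only [not_lt] at h2
      rcases lt_or_eq_of_le h1 with h | h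
      · exact h
      · exfalso; have := h2.mp h; omega
    rw [← opow_natCast, ← opow_natCast ω k]
    exact (opow_lt_opow_iff_right one_lt_omega0).mpr (Nat.cast_lt.mpr hak)
  have hsplit : L.sum = (ω : Ordinal.{u}) ^ k * n + (L.drop n).sum := by
    conv_lhs => rw [← List.take_append_drop n L]
    rw [List.sum_append, htake, ord_sum_replicate]
  have hprin : Ordinal.Principal (· + ·) ((ω : Ordinal.{u}) ^ k) := by
    rw [← opow_natCast]; exact principal_add_omega0_opow _
  have hc0 : (0 : Ordinal.{u}) < (ω : Ordinal.{u}) ^ k := by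
    rw [← opow_natCast]; exact opow_pos _ omega0_pos
  have hrest : (L.drop n).sum < (ω : Ordinal.{u}) ^ k :=
    ord_list_sum_lt hc0 hprin _ hdrop
  constructor
  · rw [hsplit]; exact le_self_add
  · rw [hsplit]
    calc (ω : Ordinal.{u}) ^ k * n + (L.drop n).sum
        < (ω : Ordinal.{u}) ^ k * n + (ω : Ordinal.{u}) ^ k := by
          exact (_root_.add_lt_add_iff_left _).mpr hrest
      _ = (ω : Ordinal.{u}) ^ k * (n + 1) := by
          rw [mul_add, mul_one]

/-- Suppose `P ∈ ℚ[T]` has degree `k ≥ 1` and leading coefficient `n/k!` for a positive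
integer `n`, and `P` is written as its Macaulay sum
`P(T) = Σ_{i=1}^N binom(T + a_i − (i−1), a_i)` with `a_1 ≥ a_2 ≥ ⋯ ≥ a_N ≥ 0`.
Then exactly `n` of the `a_i` equal `k`, all `a_i ≤ k`, and
`ω^k·n ≤ Σ_i ω^(a_i) < ω^k·(n+1)` in ordinal arithmetic (the ordinal sum being taken
in the given, decreasing-exponent, order). -/
theorem macaulay_ordinal_rank_bounds (P : Polynomial ℚ) (k n N : ℕ)
    (hk : 1 ≤ k) (hn : 0 < n)
    (hdeg : P.degree = k) (hlead : P.leadingCoeff = (n : ℚ) / (k.factorial : ℚ))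
    (a : Fin N → ℕ) (hanti : ∀ i j : Fin N, i ≤ j → a j ≤ a i)
    (hP : P = ∑ i : Fin N, binomPoly (a i) ((a i : ℤ) - (i : ℤ))) :
    (Finset.univ.filter (fun i : Fin N => a i = k)).card = n ∧
    (∀ i : Fin N, a i ≤ k) ∧
    (ω : Ordinal) ^ k * n ≤ ((List.finRange N).map (fun i => (ω : Ordinal) ^ (a i))).sum ∧
    ((List.finRange N).map (fun i => (ω : Ordinal) ^ (a i))).sum < (ω : Ordinal) ^ k * (n + 1) := by
  have hND : P.natDegree = k := natDegree_eq_of_degree_eq_some hdeg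
  have hcoeff : ∀ m : ℕ, P.coeff m =
      ∑ i : Fin N, (binomPoly (a i) ((a i : ℤ) - (i : ℤ))).coeff m := by
    intro m; rw [hP, finset_sum_coeff]
  -- all a i ≤ k
  have hle : ∀ i : Fin N, a i ≤ k := by
    by_contra hc
    push_neg at hc
    obtain ⟨i, hi⟩ := hc
    have hNpos : 0 < N := i.pos
    set i0 : Fin N := ⟨0, hNpos⟩ with hi0
    set M := a i0 with hM
    have hmax : ∀ j : Fin N, a j ≤ M := fun j => hanti i0 j (by rw [Fin.le_def]; exact Nat.zero_le _)
    have hkM : k < M := lt_of_lt_of_le hi (hmax i)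
    have h0 : P.coeff M = 0 := coeff_eq_zero_of_natDegree_lt (hND ▸ hkM)
    have hpos : 0 < P.coeff M := by
      rw [hcoeff M]
      apply Finset.sum_pos' _ ⟨i0, Finset.mem_univ _, _⟩
      · intro j _
        rcases lt_or_eq_of_le (hmax j) with h | h
        · rw [binomPoly_coeff_eq_zero _ _ h]
        · rw [h, binomPoly_coeff_self]
          positivity
      · rw [hM, binomPoly_coeff_self]
        positivity
    exact absurd h0 (ne_of_gt hpos)
  -- the count
  have hcard : (Finset.univ.filter (fun i : Fin N => a i = k)).card = n := by
    have h1 : P.coeff k =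
        ((Finset.univ.filter (fun i : Fin N => a i = k)).card : ℚ) * (1 / (k.factorial : ℚ)) := by
      rw [hcoeff k]
      have : ∀ j : Fin N, (binomPoly (a j) ((a j : ℤ) - (j : ℤ))).coeff k =
          if a j = k then 1 / (k.factorial : ℚ) else 0 := by
        intro j
        by_cases h : a j = k
        · rw [if_pos h, ← h, binomPoly_coeff_self]
        · rw [if_neg h, binomPoly_coeff_eq_zero _ _ (lt_of_le_of_ne (hle j) h)]
      simp_rw [this]
      rw [← Finset.sum_filter, Finset.sum_const]
      exact nsmul_eq_mul _ _
    have h2 : P.coeff k = (n : ℚ) * (1 / (k.factorial : ℚ)) := by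
      have := hlead
      rw [leadingCoeff, hND] at this
      rw [this, div_eq_mul_one_div]
    have hfac : (1 / (k.factorial : ℚ)) ≠ 0 := by simp [Nat.factorial_ne_zero]
    have := mul_right_cancel₀ hfac (h1.symm.trans h2)
    exact_mod_cast this
  refine ⟨hcard, hle, ?_⟩
  -- characterize which indices hit k
  have hnN : n ≤ N := by
    rw [← hcard]
    simpa using Finset.card_filter_le Finset.univ (fun i : Fin N => a i = k)
  have hiff : ∀ i : Fin N, a i = k ↔ (i : ℕ) < n := by
    intro i
    constructor
    · intro h
      by_contra hlt
      push_neg at hlt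
      -- all j ≤ i have a j = k, so card ≥ i+1 > n
      have hsub : Finset.Iic i ⊆ Finset.univ.filter (fun j : Fin N => a j = k) := by
        intro j hj
        simp only [Finset.mem_Iic] at hj
        simp only [Finset.mem_filter, Finset.mem_univ, true_and]
        exact le_antisymm (hle j) (h ▸ hanti j i hj)
      have := Finset.card_le_card hsub
      rw [hcard, Fin.card_Iic] at this
      omega
    · intro h
      by_contra hne
      have hlt : a i < k := lt_of_le_of_ne (hle i) hne
      have hsub : Finset.univ.filter (fun j : Fin N => a j = k) ⊆ Finset.Iio i := by
        intro j hj
        simp only [Finset.mem_filter, Finset.mem_univ, true_and] at hj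
        simp only [Finset.mem_Iio]
        by_contra hji
        push_neg at hji
        have := hanti i j hji
        omega
      have := Finset.card_le_card hsub
      rw [hcard, Fin.card_Iio] at this
      omega
  exact ⟨(ord_bounds a hnN hiff hle).1, (ord_bounds a hnN hiff hle).2⟩
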